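/- Let a₁,…,aₙ be vectors in ℝ^d that can be partitioned into sets 𝒜₁,…,𝒜_ℓ with ℓ even, where the span of 𝒜ᵢ has dimension rᵢ. Let ε₁,…,εₙ be independent Rademacher variables. Then for every u ∈ ℝ^d, Pr[ε₁a₁ + ⋯ + εₙaₙ = u] ≤ (2^{-ℓ} C(ℓ, ℓ/2))^{(r₁+⋯+r_ℓ)/ℓ}. -/

import Mathlib

open Finset Complex

lemma char_map_sum {p : ℕ} [NeZero p] {κ : Type*} (s : Finset κ) (f : κ → ZMod p) :
    ZMod.stdAddChar (∑ i ∈ s, f i) = ∏ i ∈ s, ZMod.stdAddChar (f i) := by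
  induction s using Finset.cons_induction with
  | empty => simp
  | cons k s hk ih => rw [Finset.sum_cons, Finset.prod_cons, AddChar.map_add_eq_mul, ih]

lemma norm_char {p : ℕ} [NeZero p] (x : ZMod p) : ‖(ZMod.stdAddChar x : ℂ)‖ = 1 := by
  rw [ZMod.stdAddChar_apply]
  exact Circle.norm_coe _

noncomputable def zc {p : ℕ} [NeZero p] {ι : Type*} [Fintype ι] (vv : ι → ZMod p)
    (θ : ι → ZMod p) : ℂ :=
  ZMod.stdAddChar (∑ k, θ k * vv k) + ZMod.stdAddChar (-(∑ k, θ k * vv k))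

lemma zc_eq_real {p : ℕ} [NeZero p] {ι : Type*} [Fintype ι] (vv θ : ι → ZMod p) :
    zc vv θ = ((2 * (ZMod.stdAddChar (∑ k, θ k * vv k) : ℂ).re : ℝ) : ℂ) := by
  rw [zc, AddChar.map_neg_eq_inv,
    Complex.inv_eq_conj (by exact norm_char _),
    Complex.add_conj]

lemma norm_zc_pow {p : ℕ} [NeZero p] {ι : Type*} [Fintype ι] {ℓ : ℕ} (hℓ : Even ℓ)
    (vv θ : ι → ZMod p) : ((‖zc vv θ‖ : ℂ)) ^ ℓ = (zc vv θ) ^ ℓ := by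
  rw [zc_eq_real]
  set ρ : ℝ := 2 * (ZMod.stdAddChar (∑ k, θ k * vv k) : ℂ).re
  rw [Complex.norm_real]
  norm_cast
  rw [Real.norm_eq_abs]
  exact hℓ.pow_abs ρ

lemma zc_pow_expand {p : ℕ} [NeZero p] {ℓ : ℕ} (x : ZMod p) :
    (ZMod.stdAddChar x + ZMod.stdAddChar (-x) : ℂ) ^ ℓ
      = ∑ m ∈ Finset.range (ℓ + 1),
          (ℓ.choose m : ℂ) * ZMod.stdAddChar ((2 * (m : ℤ) - ℓ) • x) := by
  rw [add_pow]
  refine Finset.sum_congr rfl fun m hm => ?_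
  have hm' : m ≤ ℓ := Nat.lt_succ_iff.1 (Finset.mem_range.1 hm)
  have h1 : (ZMod.stdAddChar x : ℂ) ^ m * (ZMod.stdAddChar (-x) : ℂ) ^ (ℓ - m)
      = ZMod.stdAddChar ((2 * (m : ℤ) - ℓ) • x) := by
    rw [← AddChar.map_nsmul_eq_pow, ← AddChar.map_nsmul_eq_pow, ← AddChar.map_add_eq_mul]
    congr 1
    rw [← natCast_zsmul x m, ← natCast_zsmul (-x) (ℓ - m), zsmul_neg, ← neg_zsmul, ← add_zsmul]
    congr 1
    push_cast [hm']
    ring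
  rw [h1]
  ring

lemma dot_lin {n p : ℕ} [NeZero p] {ι : Type*} [Fintype ι] (s : Finset (Fin n))
    (c : Fin n → ℤ) (v : Fin n → ι → ZMod p) (θ : ι → ZMod p) :
    ∑ i ∈ s, c i • (∑ k, θ k * v i k) = ∑ k, θ k * ((∑ i ∈ s, c i • v i) k) := by
  simp only [Finset.sum_apply, Pi.smul_apply, zsmul_eq_mul, Finset.mul_sum]
  rw [Finset.sum_comm]
  refine Finset.sum_congr rfl fun k _ => Finset.sum_congr rfl fun i _ => ?_
  simp only [Pi.mul_apply, Pi.intCast_apply]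
  ring
open Finset Complex

-- 1-dim orthogonality
lemma sum_char {N : ℕ} [NeZero N] (x : ZMod N) :
    ∑ t : ZMod N, ZMod.stdAddChar (t * x) = if x = 0 then (N : ℂ) else 0 := by
  split_ifs with h
  · simp only [h, mul_zero, AddChar.map_zero_eq_one, sum_const, card_univ, ZMod.card,
      nsmul_eq_mul, mul_one]
  · have := AddChar.sum_eq_zero_of_ne_one (ZMod.isPrimitive_stdAddChar N h)
    simpa [AddChar.mulShift_apply, mul_comm] using this

-- product orthogonality
lemma sum_char_pi {N : ℕ} [NeZero N] {ι : Type*} [Fintype ι] [DecidableEq ι] (x : ι → ZMod N) :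
    ∑ θ : ι → ZMod N, ZMod.stdAddChar (∑ k, θ k * x k)
      = if x = 0 then ((N : ℂ)) ^ (Fintype.card ι) else 0 := by
  have h1 : ∀ θ : ι → ZMod N, ZMod.stdAddChar (∑ k, θ k * x k)
      = ∏ k, ZMod.stdAddChar (θ k * x k) := by
    intro θ
    induction (univ : Finset ι) using Finset.cons_induction with
    | empty => simp
    | cons k s hk ih => rw [Finset.sum_cons, Finset.prod_cons, AddChar.map_add_eq_mul, ih]
  simp_rw [h1]
  rw [← Fintype.piFinset_univ, ← Finset.prod_univ_sum (fun _ => univ) (fun k t => ZMod.stdAddChar (t * x k))]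
  simp_rw [sum_char]
  by_cases h : x = 0
  · simp [h, Finset.card_univ]
  · obtain ⟨k, hk⟩ : ∃ k, x k ≠ 0 := by
      by_contra hc; push_neg at hc; exact h (funext hc)
    rw [Finset.prod_eq_zero (Finset.mem_univ k) (by simp [hk]), if_neg h]
open Finset

/-- Generalized Hölder in power form: `(∑ ∏ g)^ℓ ≤ ∏ (∑ g^ℓ)` for `ℓ` nonneg functions. -/
lemma holder_pow {Θ : Type*} [Fintype Θ] {ℓ : ℕ} (hℓ : 0 < ℓ) (g : Fin ℓ → Θ → ℝ)
    (hg : ∀ j θ, 0 ≤ g j θ) :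
    (∑ θ, ∏ j, g j θ) ^ ℓ ≤ ∏ j, ∑ θ, (g j θ) ^ ℓ := by
  by_cases hzero : ∃ j, ∑ θ, (g j θ) ^ ℓ = 0
  · -- then g j ≡ 0, LHS = 0
    obtain ⟨j, hj⟩ := hzero
    have hjz : ∀ θ, g j θ = 0 := by
      intro θ
      have h1 : ∀ θ ∈ (univ : Finset Θ), 0 ≤ (g j θ) ^ ℓ := fun θ _ => pow_nonneg (hg j θ) ℓ
      have := (Finset.sum_eq_zero_iff_of_nonneg h1).1 hj θ (mem_univ θ)
      exact pow_eq_zero_iff hℓ.ne' |>.1 this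
    have : (∑ θ, ∏ j', g j' θ) = 0 := by
      apply Finset.sum_eq_zero
      intro θ _
      exact Finset.prod_eq_zero (mem_univ j) (hjz θ)
    rw [this, zero_pow hℓ.ne']
    exact Finset.prod_nonneg fun j' _ => Finset.sum_nonneg fun θ _ => pow_nonneg (hg j' θ) ℓ
  push_neg at hzero
  have hSpos : ∀ j, 0 < ∑ θ, (g j θ) ^ ℓ := by
    intro j
    rcases (Finset.sum_nonneg fun θ _ => pow_nonneg (hg j θ) ℓ).lt_or_eq with h | h
    · exact h
    · exact absurd h.symm (hzero j)
  set S : Fin ℓ → ℝ := fun j => ∑ θ, (g j θ) ^ ℓ with hS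
  set t : Fin ℓ → ℝ := fun j => (S j) ^ ((ℓ : ℝ)⁻¹) with ht
  have htpos : ∀ j, 0 < t j := fun j => Real.rpow_pos_of_pos (hSpos j) _
  have htpow : ∀ j, (t j) ^ ℓ = S j := by
    intro j
    rw [ht, ← Real.rpow_natCast ((S j) ^ ((ℓ:ℝ)⁻¹)) ℓ, ← Real.rpow_mul (hSpos j).le]
    rw [inv_mul_cancel₀ (by exact_mod_cast hℓ.ne'), Real.rpow_one]
  -- pointwise AM-GM for the normalized functions
  have key : ∀ θ, ∏ j, g j θ / t j ≤ ∑ j, (1 / ℓ) * ((g j θ / t j) ^ ℓ) := by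
    intro θ
    have := Real.geom_mean_le_arith_mean_weighted univ (fun _ => 1 / (ℓ:ℝ))
      (fun j => (g j θ / t j) ^ ℓ)
      (fun j _ => by positivity)
      (by simp [Finset.card_univ]; field_simp)
      (fun j _ => pow_nonneg (div_nonneg (hg j θ) (htpos j).le) _)
    calc ∏ j, g j θ / t j = ∏ j, ((g j θ / t j) ^ ℓ) ^ (1 / (ℓ:ℝ)) := by
          apply Finset.prod_congr rfl
          intro j _
          rw [← Real.rpow_natCast (g j θ / t j) ℓ,
            ← Real.rpow_mul (div_nonneg (hg j θ) (htpos j).le)]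
          rw [mul_one_div, div_self (by exact_mod_cast hℓ.ne'), Real.rpow_one]
      _ ≤ ∑ j, (1 / ℓ) * ((g j θ / t j) ^ ℓ) := this
  have main : ∑ θ, ∏ j, g j θ / t j ≤ 1 := by
    calc ∑ θ, ∏ j, g j θ / t j ≤ ∑ θ, ∑ j, (1 / ℓ) * ((g j θ / t j) ^ ℓ) :=
          Finset.sum_le_sum fun θ _ => key θ
      _ = ∑ j, (1 / ℓ) * ((∑ θ, (g j θ) ^ ℓ) / (t j) ^ ℓ) := by
          rw [Finset.sum_comm]
          apply Finset.sum_congr rfl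
          intro j _
          rw [← Finset.mul_sum]
          congr 1
          rw [Finset.sum_div]
          apply Finset.sum_congr rfl
          intro θ _
          rw [div_pow]
      _ = ∑ _j : Fin ℓ, (1 / (ℓ:ℝ)) * 1 := by
          apply Finset.sum_congr rfl
          intro j _
          rw [htpow j, div_self (hSpos j).ne']
      _ = 1 := by
          rw [Finset.sum_const, Finset.card_univ, Fintype.card_fin, mul_one, nsmul_eq_mul]
          field_simp
  have hprod : ∑ θ, ∏ j, g j θ / t j = (∑ θ, ∏ j, g j θ) / ∏ j, t j := by
    rw [Finset.sum_div]
    apply Finset.sum_congr rfl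
    intro θ _
    rw [Finset.prod_div_distrib]
  rw [hprod, div_le_one (Finset.prod_pos fun j _ => htpos j)] at main
  calc (∑ θ, ∏ j, g j θ) ^ ℓ ≤ (∏ j, t j) ^ ℓ := by
        apply pow_le_pow_left₀ (Finset.sum_nonneg fun θ _ => Finset.prod_nonneg fun j _ => hg j θ) main
    _ = ∏ j, (t j) ^ ℓ := by rw [Finset.prod_pow]
    _ = ∏ j, S j := Finset.prod_congr rfl fun j _ => htpow j

lemma block_bound {n p : ℕ} [NeZero p] {ι : Type*} [Fintype ι] [DecidableEq ι]
    {ℓ : ℕ} (hℓeven : Even ℓ) (hℓpos : 0 < ℓ)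
    (s B : Finset (Fin n)) (hB : B ⊆ s)
    (v : Fin n → ι → ZMod p)
    (hind : ∀ c : Fin n → ℤ, (∀ i, |c i| ≤ 2 * ℓ) → (∑ i ∈ B, c i • v i = 0) →
      ∀ i ∈ B, c i = 0) :
    ∑ θ : ι → ZMod p, (∏ i ∈ s, ‖zc (v i) θ‖) ^ ℓ
      ≤ (p : ℝ) ^ (Fintype.card ι) *
        ((2 : ℝ) ^ (ℓ * s.card) * ((ℓ.choose (ℓ / 2) : ℝ) / 2 ^ ℓ) ^ B.card) := by
  classical
  set K := Fintype.card ι with hK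
  set T : Finset (Fin n → ℕ) :=
    Fintype.piFinset (fun i => if i ∈ s then Finset.range (ℓ + 1) else {0}) with hT
  set y : (Fin n → ℕ) → (ι → ZMod p) :=
    fun x => ∑ i ∈ s, (2 * (x i : ℤ) - ℓ) • v i with hy
  set W : ℝ := ∑ x ∈ T.filter (fun x => y x = 0), ∏ i ∈ s, (ℓ.choose (x i) : ℝ) with hW
  have hxmem : ∀ x ∈ T, ∀ i, x i ≤ ℓ ∧ (i ∉ s → x i = 0) := by
    intro x hx i
    have h := Fintype.mem_piFinset.1 hx i
    by_cases hi : i ∈ s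
    · simp only [hi, if_true, Finset.mem_range] at h
      exact ⟨Nat.lt_succ_iff.1 h, fun h' => absurd hi h'⟩
    · simp only [hi, if_false, Finset.mem_singleton] at h
      exact ⟨h ▸ Nat.zero_le _, fun _ => h⟩
  -- STEP 2 : identity  ∑_θ (∏ ‖zc‖)^ℓ = p^K * W
  have step2 : ∑ θ : ι → ZMod p, (∏ i ∈ s, ‖zc (v i) θ‖) ^ ℓ = (p : ℝ) ^ K * W := by
    have cast_eq : ((∑ θ : ι → ZMod p, (∏ i ∈ s, ‖zc (v i) θ‖) ^ ℓ : ℝ) : ℂ)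
        = ∑ θ : ι → ZMod p, ∏ i ∈ s, (zc (v i) θ) ^ ℓ := by
      push_cast
      refine Finset.sum_congr rfl fun θ _ => ?_
      rw [← Finset.prod_pow]
      exact Finset.prod_congr rfl fun i _ => norm_zc_pow hℓeven _ _
    have expand : ∀ θ : ι → ZMod p, ∏ i ∈ s, (zc (v i) θ) ^ ℓ
        = ∑ x ∈ T, (∏ i ∈ s, (ℓ.choose (x i) : ℂ)) *
            ZMod.stdAddChar (∑ k, θ k * (y x) k) := by
      intro θ
      have e1 : ∏ i ∈ s, (zc (v i) θ) ^ ℓ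
          = ∏ i, ∑ m ∈ (if i ∈ s then Finset.range (ℓ + 1) else {0}), (if i ∈ s then
              (ℓ.choose m : ℂ) * ZMod.stdAddChar ((2 * (m : ℤ) - ℓ) • (∑ k, θ k * v i k))
              else 1) := by
        calc ∏ i ∈ s, (zc (v i) θ) ^ ℓ
            = ∏ i ∈ s, ∑ m ∈ (if i ∈ s then Finset.range (ℓ + 1) else {0}), (if i ∈ s then
                (ℓ.choose m : ℂ) * ZMod.stdAddChar ((2 * (m : ℤ) - ℓ) • (∑ k, θ k * v i k))
                else 1) := by
              refine Finset.prod_congr rfl fun i hi => ?_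
              simp only [hi, if_true]
              rw [zc, zc_pow_expand]
          _ = _ := by
              refine Finset.prod_subset (Finset.subset_univ s) fun i _ hi => ?_
              simp [hi]
      rw [e1, Finset.prod_univ_sum]
      refine Finset.sum_congr rfl fun x hx => ?_
      have e2 : ∏ i, (if i ∈ s then
            (ℓ.choose (x i) : ℂ) * ZMod.stdAddChar ((2 * (x i : ℤ) - ℓ) • (∑ k, θ k * v i k))
            else 1)
          = ∏ i ∈ s, ((ℓ.choose (x i) : ℂ) *
              ZMod.stdAddChar ((2 * (x i : ℤ) - ℓ) • (∑ k, θ k * v i k))) := by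
        rw [← Finset.prod_subset (Finset.subset_univ s) (fun i _ hi => by simp [hi])]
        exact Finset.prod_congr rfl fun i hi => by simp [hi]
      rw [e2, Finset.prod_mul_distrib]
      congr 1
      rw [← char_map_sum]
      congr 1
      exact dot_lin s (fun i => 2 * (x i : ℤ) - ℓ) v θ
    have main : ((∑ θ : ι → ZMod p, (∏ i ∈ s, ‖zc (v i) θ‖) ^ ℓ : ℝ) : ℂ)
        = (((p : ℝ) ^ K * W : ℝ) : ℂ) := by
      rw [cast_eq]
      simp_rw [expand]
      rw [Finset.sum_comm]
      have e3 : ∀ x ∈ T, ∑ θ : ι → ZMod p,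
          (∏ i ∈ s, (ℓ.choose (x i) : ℂ)) * ZMod.stdAddChar (∑ k, θ k * (y x) k)
          = if y x = 0 then (∏ i ∈ s, (ℓ.choose (x i) : ℂ)) * ((p : ℂ)) ^ K else 0 := by
        intro x _
        rw [← Finset.mul_sum, sum_char_pi]
        split_ifs with h
        · rfl
        · rw [mul_zero]
      rw [Finset.sum_congr rfl e3, ← Finset.sum_filter, hW]
      push_cast
      rw [← Finset.sum_mul]
      exact mul_comm _ _
    exact_mod_cast main
  -- STEP 3 : counting  W ≤ 2^(ℓ * |s|) * (C/2^ℓ)^|B|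
  have step3 : W ≤ (2 : ℝ) ^ (ℓ * s.card) * ((ℓ.choose (ℓ / 2) : ℝ) / 2 ^ ℓ) ^ B.card := by
    set F : Finset (Fin n → ℕ) := T.filter (fun x => y x = 0) with hF
    set Ct : ℝ := (ℓ.choose (ℓ / 2) : ℝ) with hCt
    have hCtnn : (0:ℝ) ≤ Ct := by positivity
    have pointwise : ∀ x ∈ F, ∏ i ∈ s, (ℓ.choose (x i) : ℝ)
        ≤ Ct ^ B.card * ∏ i ∈ s \ B, (ℓ.choose (x i) : ℝ) := by
      intro x _
      rw [← Finset.prod_sdiff hB, mul_comm]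
      refine mul_le_mul_of_nonneg_right ?_ (Finset.prod_nonneg fun i _ => by positivity)
      calc ∏ i ∈ B, (ℓ.choose (x i) : ℝ) ≤ ∏ _i ∈ B, Ct := by
            refine Finset.prod_le_prod (fun i _ => by positivity) (fun i _ => ?_)
            rw [hCt]
            exact_mod_cast Nat.choose_le_middle (x i) ℓ
        _ = Ct ^ B.card := by rw [Finset.prod_const]
    have W_le : W ≤ Ct ^ B.card * ∑ x ∈ F, ∏ i ∈ s \ B, (ℓ.choose (x i) : ℝ) := by
      rw [hW, Finset.mul_sum]
      exact Finset.sum_le_sum pointwise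
    set G : (Fin n → ℕ) → (Fin n → ℕ) := fun x i => if i ∈ B then 0 else x i with hG
    have hinj : ∀ x ∈ F, ∀ x' ∈ F, G x = G x' → x = x' := by
      intro x hx x' hx' hGeq
      have hxT : x ∈ T := (Finset.mem_filter.1 hx).1
      have hx'T : x' ∈ T := (Finset.mem_filter.1 hx').1
      have hyx : y x = 0 := (Finset.mem_filter.1 hx).2
      have hyx' : y x' = 0 := (Finset.mem_filter.1 hx').2
      have hoffB : ∀ i, i ∉ B → x i = x' i := by
        intro i hi
        have h := congrFun hGeq i
        simpa [hG, hi] using h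
      set c : Fin n → ℤ := fun i => 2 * (x i : ℤ) - 2 * (x' i : ℤ) with hc
      have habs : ∀ i, |c i| ≤ 2 * ℓ := by
        intro i
        have h1 : (x i : ℤ) ≤ ℓ := by exact_mod_cast (hxmem x hxT i).1
        have h2 : (x' i : ℤ) ≤ ℓ := by exact_mod_cast (hxmem x' hx'T i).1
        have h3 : (0:ℤ) ≤ (x i : ℤ) := Int.natCast_nonneg _
        have h4 : (0:ℤ) ≤ (x' i : ℤ) := Int.natCast_nonneg _
        simp only [hc, abs_le]
        omega
      have hsum : ∑ i ∈ B, c i • v i = 0 := by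
        have hs : ∑ i ∈ s, c i • v i = 0 := by
          have hterm : ∀ i ∈ s, c i • v i
              = (2 * (x i : ℤ) - ℓ) • v i - (2 * (x' i : ℤ) - ℓ) • v i := by
            intro i _
            rw [← sub_smul, hc]
            congr 1
            ring
          rw [Finset.sum_congr rfl hterm, Finset.sum_sub_distrib]
          simp only [hy] at hyx hyx'
          rw [hyx, hyx', sub_zero]
        rw [← hs]
        apply Finset.sum_subset hB
        intro i _ hiB
        simp only [hc]
        rw [hoffB i hiB, sub_self, zero_smul]
      funext i
      by_cases hiB : i ∈ B
      · have h0 := hind c habs hsum i hiB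
        simp only [hc] at h0
        have : (x i : ℤ) = (x' i : ℤ) := by omega
        exact_mod_cast this
      · exact hoffB i hiB
    have himage : ∀ x ∈ F, G x ∈
        Fintype.piFinset (fun i => if i ∈ s \ B then Finset.range (ℓ + 1) else {0}) := by
      intro x hx
      have hxT : x ∈ T := (Finset.mem_filter.1 hx).1
      rw [Fintype.mem_piFinset]
      intro i
      by_cases hiB : i ∈ B
      · have h' : i ∉ s \ B := fun h => (Finset.mem_sdiff.1 h).2 hiB
        simp [hG, hiB, h']
      · by_cases his : i ∈ s
        · have h' : i ∈ s \ B := Finset.mem_sdiff.2 ⟨his, hiB⟩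
          simp only [hG, hiB, if_false, h', if_true, Finset.mem_range]
          exact Nat.lt_succ_of_le (hxmem x hxT i).1
        · have h0 : x i = 0 := (hxmem x hxT i).2 his
          have h' : i ∉ s \ B := fun h => his (Finset.mem_sdiff.1 h).1
          simp [hG, hiB, h', h0]
    have sum_eq_image : ∑ x ∈ F, ∏ i ∈ s \ B, (ℓ.choose (x i) : ℝ)
        = ∑ z ∈ F.image G, ∏ i ∈ s \ B, (ℓ.choose (z i) : ℝ) := by
      rw [Finset.sum_image hinj]
      refine Finset.sum_congr rfl fun x _ => Finset.prod_congr rfl fun i hi => ?_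
      have hiB : i ∉ B := (Finset.mem_sdiff.1 hi).2
      simp [hG, hiB]
    have cube_bound : ∑ z ∈ F.image G, ∏ i ∈ s \ B, (ℓ.choose (z i) : ℝ)
        ≤ ((2:ℝ) ^ ℓ) ^ (s \ B).card := by
      calc ∑ z ∈ F.image G, ∏ i ∈ s \ B, (ℓ.choose (z i) : ℝ)
          ≤ ∑ z ∈ Fintype.piFinset (fun i => if i ∈ s \ B then Finset.range (ℓ + 1) else {0}),
              ∏ i ∈ s \ B, (ℓ.choose (z i) : ℝ) := by
            apply Finset.sum_le_sum_of_subset_of_nonneg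
            · intro z hz
              obtain ⟨x, hx, rfl⟩ := Finset.mem_image.1 hz
              exact himage x hx
            · intro z _ _
              exact Finset.prod_nonneg fun i _ => by positivity
        _ = ∑ z ∈ Fintype.piFinset (fun i => if i ∈ s \ B then Finset.range (ℓ + 1) else {0}),
              ∏ i, (if i ∈ s \ B then (ℓ.choose (z i) : ℝ) else 1) := by
            refine Finset.sum_congr rfl fun z _ => ?_
            calc ∏ i ∈ s \ B, (ℓ.choose (z i) : ℝ)
                = ∏ i ∈ s \ B, (if i ∈ s \ B then (ℓ.choose (z i) : ℝ) else 1) :=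
                  Finset.prod_congr rfl fun i hi => by simp [hi]
              _ = _ := Finset.prod_subset (Finset.subset_univ _) fun i _ hi => by simp [hi]
        _ = ∏ i, ∑ m ∈ (if i ∈ s \ B then Finset.range (ℓ + 1) else {0}),
              (if i ∈ s \ B then (ℓ.choose m : ℝ) else 1) := by
            rw [Finset.prod_univ_sum]
        _ = ∏ i, (if i ∈ s \ B then (2:ℝ) ^ ℓ else 1) := by
            refine Finset.prod_congr rfl fun i _ => ?_
            by_cases hi : i ∈ s \ B
            · simp only [hi, if_true]
              rw [← Nat.cast_sum _ _, Nat.sum_range_choose]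
              push_cast
              ring
            · simp [hi]
        _ = ((2:ℝ) ^ ℓ) ^ (s \ B).card := by
            calc ∏ i, (if i ∈ s \ B then (2:ℝ) ^ ℓ else 1)
                = ∏ i ∈ s \ B, (if i ∈ s \ B then (2:ℝ) ^ ℓ else 1) :=
                  (Finset.prod_subset (Finset.subset_univ _) fun i _ hi => by simp [hi]).symm
              _ = ∏ _i ∈ s \ B, (2:ℝ) ^ ℓ := Finset.prod_congr rfl fun i hi => by simp [hi]
              _ = _ := Finset.prod_const _
    have final_count : Ct ^ B.card * ((2:ℝ) ^ ℓ) ^ (s \ B).card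
        = (2 : ℝ) ^ (ℓ * s.card) * (Ct / 2 ^ ℓ) ^ B.card := by
      have hle : B.card ≤ s.card := Finset.card_le_card hB
      have hcard : (s \ B).card = s.card - B.card := Finset.card_sdiff_of_subset hB
      have h2 : ((2:ℝ) ^ ℓ) ^ (s.card - B.card) * ((2:ℝ) ^ ℓ) ^ B.card
          = (2:ℝ) ^ (ℓ * s.card) := by
        rw [← pow_add, ← pow_mul]
        have h3 : s.card - B.card + B.card = s.card := by omega
        rw [h3]
      rw [hcard, div_pow, ← mul_div_assoc, eq_div_iff (by positivity), mul_assoc, h2]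
      ring
    calc W ≤ Ct ^ B.card * ∑ x ∈ F, ∏ i ∈ s \ B, (ℓ.choose (x i) : ℝ) := W_le
      _ ≤ Ct ^ B.card * ((2:ℝ) ^ ℓ) ^ (s \ B).card := by
          rw [sum_eq_image]
          exact mul_le_mul_of_nonneg_left cube_bound (by positivity)
      _ = (2 : ℝ) ^ (ℓ * s.card) * (Ct / 2 ^ ℓ) ^ B.card := final_count
  rw [step2]
  exact mul_le_mul_of_nonneg_left step3 (by positivity)

lemma key_count {n p : ℕ} [NeZero p] {ι : Type*} [Fintype ι] [DecidableEq ι]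
    {ℓ : ℕ} (hℓeven : Even ℓ) (hℓpos : 0 < ℓ)
    (𝒜 : Fin ℓ → Finset (Fin n))
    (hdisj : Pairwise fun i j => Disjoint (𝒜 i) (𝒜 j))
    (hcover : ∀ i : Fin n, ∃ j, i ∈ 𝒜 j)
    (r : Fin ℓ → ℕ)
    (B : Fin ℓ → Finset (Fin n)) (hBsub : ∀ j, B j ⊆ 𝒜 j) (hBcard : ∀ j, (B j).card = r j)
    (v : Fin n → ι → ZMod p) (w : ι → ZMod p)
    (hind : ∀ j (c : Fin n → ℤ), (∀ i, |c i| ≤ 2 * ℓ) →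
      (∑ i ∈ B j, c i • v i = 0) → ∀ i ∈ B j, c i = 0) :
    (((Finset.univ.filter (fun σ : Fin n → Bool =>
        ∑ i, (if σ i then (1:ℤ) else -1) • v i = w)).card : ℝ) / 2 ^ n) ^ ℓ
      ≤ ∏ j, ((ℓ.choose (ℓ / 2) : ℝ) / 2 ^ ℓ) ^ (r j) := by
  classical
  set K := Fintype.card ι with hK
  set Np := (Finset.univ.filter (fun σ : Fin n → Bool =>
      ∑ i, (if σ i then (1:ℤ) else -1) • v i = w)).card with hNp
  -- partition facts
  have hbiU : (Finset.univ : Finset (Fin ℓ)).biUnion 𝒜 = Finset.univ := by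
    apply Finset.eq_univ_of_forall
    intro i
    obtain ⟨j, hj⟩ := hcover i
    exact Finset.mem_biUnion.2 ⟨j, Finset.mem_univ j, hj⟩
  have hpd : ((Finset.univ : Finset (Fin ℓ)) : Set (Fin ℓ)).PairwiseDisjoint 𝒜 := by
    intro j _ j' _ hjj'
    exact hdisj hjj'
  have hn : ∑ j, (𝒜 j).card = n := by
    rw [← Finset.card_biUnion (fun j _ j' _ h => hdisj h), hbiU, Finset.card_univ,
      Fintype.card_fin]
  -- Fourier identity
  have identity : (Np : ℂ) * (p : ℂ) ^ K
      = ∑ θ : ι → ZMod p, (∏ i, zc (v i) θ) *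
          ZMod.stdAddChar (-(∑ k, θ k * w k)) := by
    have h0 : ∀ σ : Fin n → Bool,
        ((if (∑ i, (if σ i then (1:ℤ) else -1) • v i = w) then (1:ℂ) else 0) * (p:ℂ) ^ K)
        = ∑ θ : ι → ZMod p, ZMod.stdAddChar
            (∑ k, θ k * ((∑ i, (if σ i then (1:ℤ) else -1) • v i - w) k)) := by
      intro σ
      rw [sum_char_pi]
      by_cases h : ∑ i, (if σ i then (1:ℤ) else -1) • v i = w
      · rw [if_pos h, if_pos (by rw [h, sub_self]), one_mul]
      · rw [if_neg h, if_neg (fun hc => h (by rwa [sub_eq_zero] at hc)), zero_mul]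
    have h1 : (Np : ℂ) = ∑ σ : Fin n → Bool,
        (if (∑ i, (if σ i then (1:ℤ) else -1) • v i = w) then (1:ℂ) else 0) := by
      rw [hNp]
      rw [Finset.sum_boole]
    rw [h1, Finset.sum_mul]
    rw [Finset.sum_congr rfl (fun σ _ => h0 σ), Finset.sum_comm]
    refine Finset.sum_congr rfl fun θ _ => ?_
    have h2 : ∀ σ : Fin n → Bool,
        ZMod.stdAddChar (∑ k, θ k * ((∑ i, (if σ i then (1:ℤ) else -1) • v i - w) k))
        = (∏ i, (if σ i then ZMod.stdAddChar (∑ k, θ k * v i k)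
            else ZMod.stdAddChar (-(∑ k, θ k * v i k)))) *
          ZMod.stdAddChar (-(∑ k, θ k * w k)) := by
      intro σ
      have e1 : ∑ k, θ k * ((∑ i, (if σ i then (1:ℤ) else -1) • v i - w) k)
          = (∑ i, (if σ i then (1:ℤ) else -1) • (∑ k, θ k * v i k)) + (-(∑ k, θ k * w k)) := by
        have := dot_lin (Finset.univ) (fun i => if σ i then (1:ℤ) else -1) v θ
        simp only [Pi.sub_apply]
        rw [Finset.sum_congr rfl (fun k _ => mul_sub (θ k) _ _), Finset.sum_sub_distrib, this]
        ring
      rw [e1, AddChar.map_add_eq_mul]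
      congr 1
      rw [char_map_sum]
      refine Finset.prod_congr rfl fun i _ => ?_
      rcases Bool.eq_false_or_eq_true (σ i) with h | h <;> rw [h] <;>
        simp [neg_one_zsmul]
    rw [Finset.sum_congr rfl fun σ _ => h2 σ, ← Finset.sum_mul]
    congr 1
    have hswap := Finset.prod_univ_sum (fun _ : Fin n => (Finset.univ : Finset Bool))
      (fun i b => if b then ZMod.stdAddChar (∑ k, θ k * v i k)
        else ZMod.stdAddChar (-(∑ k, θ k * v i k)))
    simp only [Finset.sum_boole, Fintype.sum_bool, if_true, if_false,
      Fintype.piFinset_univ] at hswap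
    rw [← hswap]
    refine Finset.prod_congr rfl fun i _ => ?_
    simp [zc]
  -- norm bound
  have normbd : (Np : ℝ) * (p : ℝ) ^ K ≤ ∑ θ : ι → ZMod p, ∏ i, ‖zc (v i) θ‖ := by
    have h3 : (Np : ℝ) * (p : ℝ) ^ K = ‖(Np : ℂ) * (p : ℂ) ^ K‖ := by
      rw [norm_mul, norm_pow, Complex.norm_natCast, Complex.norm_natCast]
    rw [h3, identity]
    calc ‖∑ θ : ι → ZMod p, (∏ i, zc (v i) θ) * ZMod.stdAddChar (-(∑ k, θ k * w k))‖
        ≤ ∑ θ : ι → ZMod p, ‖(∏ i, zc (v i) θ) * ZMod.stdAddChar (-(∑ k, θ k * w k))‖ :=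
          norm_sum_le _ _
      _ = ∑ θ : ι → ZMod p, ∏ i, ‖zc (v i) θ‖ := by
          refine Finset.sum_congr rfl fun θ _ => ?_
          rw [norm_mul, norm_char, mul_one, norm_prod]
  -- regroup into blocks and apply Hölder + block bounds
  set g : Fin ℓ → (ι → ZMod p) → ℝ := fun j θ => ∏ i ∈ 𝒜 j, ‖zc (v i) θ‖ with hg
  have hregroup : ∀ θ : ι → ZMod p, ∏ i, ‖zc (v i) θ‖ = ∏ j, g j θ := by
    intro θ
    rw [hg, ← hbiU, Finset.prod_biUnion hpd]
  have holder : (∑ θ : ι → ZMod p, ∏ j, g j θ) ^ ℓ ≤ ∏ j, ∑ θ : ι → ZMod p, (g j θ) ^ ℓ :=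
    holder_pow hℓpos g (fun j θ => Finset.prod_nonneg fun i _ => norm_nonneg _)
  have blocks : ∀ j, ∑ θ : ι → ZMod p, (g j θ) ^ ℓ
      ≤ (p : ℝ) ^ K * ((2 : ℝ) ^ (ℓ * (𝒜 j).card) * ((ℓ.choose (ℓ / 2) : ℝ) / 2 ^ ℓ) ^ (r j)) := by
    intro j
    rw [← hBcard j]
    exact block_bound hℓeven hℓpos (𝒜 j) (B j) (hBsub j) v (hind j)
  have prodblocks : ∏ j, ∑ θ : ι → ZMod p, (g j θ) ^ ℓ
      ≤ ((p : ℝ) ^ K) ^ ℓ * (2 : ℝ) ^ (ℓ * n) * ∏ j, ((ℓ.choose (ℓ / 2) : ℝ) / 2 ^ ℓ) ^ (r j) := by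
    calc ∏ j, ∑ θ : ι → ZMod p, (g j θ) ^ ℓ
        ≤ ∏ j, ((p : ℝ) ^ K * ((2 : ℝ) ^ (ℓ * (𝒜 j).card) *
            ((ℓ.choose (ℓ / 2) : ℝ) / 2 ^ ℓ) ^ (r j))) := by
          refine Finset.prod_le_prod (fun j _ => ?_) (fun j _ => blocks j)
          exact Finset.sum_nonneg fun θ _ => pow_nonneg
            (Finset.prod_nonneg fun i _ => norm_nonneg _) _
      _ = ((p : ℝ) ^ K) ^ ℓ * (∏ j, (2 : ℝ) ^ (ℓ * (𝒜 j).card)) *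
            ∏ j, ((ℓ.choose (ℓ / 2) : ℝ) / 2 ^ ℓ) ^ (r j) := by
          rw [Finset.prod_mul_distrib, Finset.prod_mul_distrib, Finset.prod_const,
            Finset.card_univ, Fintype.card_fin, mul_assoc]
      _ = ((p : ℝ) ^ K) ^ ℓ * (2 : ℝ) ^ (ℓ * n) * ∏ j, ((ℓ.choose (ℓ / 2) : ℝ) / 2 ^ ℓ) ^ (r j) := by
          congr 2
          rw [Finset.prod_pow_eq_pow_sum]
          congr 1
          rw [← Finset.mul_sum, hn]
  -- final algebra
  have hppos : (0:ℝ) < (p : ℝ) ^ K := by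
    have : (0:ℝ) < (p:ℝ) := by exact_mod_cast Nat.pos_of_ne_zero (NeZero.ne p)
    positivity
  have lhs_le : ((Np : ℝ) * (p : ℝ) ^ K) ^ ℓ
      ≤ ((p : ℝ) ^ K) ^ ℓ * (2 : ℝ) ^ (ℓ * n) * ∏ j, ((ℓ.choose (ℓ / 2) : ℝ) / 2 ^ ℓ) ^ (r j) := by
    calc ((Np : ℝ) * (p : ℝ) ^ K) ^ ℓ ≤ (∑ θ : ι → ZMod p, ∏ j, g j θ) ^ ℓ := by
          apply pow_le_pow_left₀ (by positivity)
          rw [← Finset.sum_congr rfl fun θ _ => hregroup θ]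
          exact normbd
      _ ≤ ∏ j, ∑ θ : ι → ZMod p, (g j θ) ^ ℓ := holder
      _ ≤ _ := prodblocks
  have expand_lhs : ((Np : ℝ) * (p : ℝ) ^ K) ^ ℓ = (Np:ℝ)^ℓ * ((p : ℝ) ^ K) ^ ℓ := by ring
  rw [expand_lhs] at lhs_le
  have h5 : (Np:ℝ)^ℓ * ((p : ℝ) ^ K) ^ ℓ
      = (((p : ℝ) ^ K) ^ ℓ) * (Np:ℝ)^ℓ := by ring
  rw [h5] at lhs_le
  rw [mul_assoc] at lhs_le
  have h6 : (Np:ℝ)^ℓ ≤ (2 : ℝ) ^ (ℓ * n) * ∏ j, ((ℓ.choose (ℓ / 2) : ℝ) / 2 ^ ℓ) ^ (r j) :=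
    le_of_mul_le_mul_left lhs_le (by positivity)
  rw [div_pow, div_le_iff₀ (by positivity)]
  calc (Np:ℝ)^ℓ ≤ (2 : ℝ) ^ (ℓ * n) * ∏ j, ((ℓ.choose (ℓ / 2) : ℝ) / 2 ^ ℓ) ^ (r j) := h6
    _ = (∏ j, ((ℓ.choose (ℓ / 2) : ℝ) / 2 ^ ℓ) ^ (r j)) * ((2:ℝ) ^ n) ^ ℓ := by
        rw [← pow_mul, mul_comm n ℓ]
        ring

lemma exists_indep_subset {n d : ℕ} (a : Fin n → Fin d → ℝ) (s : Finset (Fin n)) (r : ℕ)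
    (hr : Module.finrank ℝ (Submodule.span ℝ (a '' (s : Set (Fin n)))) = r) :
    ∃ B : Finset (Fin n), B ⊆ s ∧ B.card = r ∧
      ∀ f : Fin n → ℝ, ∑ i ∈ B, f i • a i = 0 → ∀ i ∈ B, f i = 0 := by
  classical
  obtain ⟨bset, hbsub, hbspan, hbli⟩ := exists_linearIndependent ℝ (a '' (s : Set (Fin n)))
  have hsfin : (a '' (s : Set (Fin n))).Finite := ((s : Set (Fin n)).toFinite).image a
  have hbfin : bset.Finite := hsfin.subset hbsub
  haveI : Fintype bset := hbfin.fintype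
  set t : Finset (Fin d → ℝ) := bset.toFinset with htdef
  have hmemt : ∀ x : {y // y ∈ t}, x.1 ∈ bset := fun x => Set.mem_toFinset.1 x.2
  have hchoice : ∀ x ∈ bset, ∃ i, i ∈ s ∧ a i = x := by
    intro x hx
    obtain ⟨i, hi, rfl⟩ := hbsub hx
    exact ⟨i, hi, rfl⟩
  choose pick hpick1 hpick2 using hchoice
  set B : Finset (Fin n) := t.attach.image (fun x => pick x.1 (hmemt x)) with hBdef
  have hinjpick : ∀ x ∈ t.attach, ∀ x' ∈ t.attach,
      pick x.1 (hmemt x) = pick x'.1 (hmemt x') → x = x' := by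
    intro x _ x' _ h
    have h2 := congrArg a h
    rw [hpick2 x.1 (hmemt x), hpick2 x'.1 (hmemt x')] at h2
    exact Subtype.ext h2
  have hcardt : t.card = r := by
    have h3 := finrank_span_set_eq_card (R := ℝ) (s := bset) hbli
    rw [hbspan, hr] at h3
    rw [htdef, h3]
  refine ⟨B, ?_, ?_, ?_⟩
  · intro i hi
    obtain ⟨x, _, rfl⟩ := Finset.mem_image.1 hi
    exact hpick1 _ _
  · rw [hBdef, Finset.card_image_of_injOn (fun x hx x' hx' h => hinjpick x hx x' hx' h),
      Finset.card_attach, hcardt]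
  · intro f hf
    set e : {y // y ∈ t} ≃ bset := Equiv.subtypeEquivRight (fun x => Set.mem_toFinset) with he
    set gco : bset → ℝ := fun x => f (pick x.1 x.2) with hgco
    have hsum2 : ∑ x : bset, gco x • (x : Fin d → ℝ) = 0 := by
      rw [← hf, hBdef, Finset.sum_image hinjpick]
      rw [← Finset.univ_eq_attach]
      rw [← Equiv.sum_comp e (fun x => gco x • (x : Fin d → ℝ))]
      refine Finset.sum_congr rfl fun x _ => ?_
      rw [hgco, he]
      simp only [Equiv.subtypeEquivRight_apply_coe]
      rw [hpick2 x.1 (hmemt x)]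
    have hzero := (Fintype.linearIndependent_iff.1 hbli) gco hsum2
    intro i hi
    obtain ⟨x, _, rfl⟩ := Finset.mem_image.1 hi
    have := hzero (e x)
    rw [hgco] at this
    exact this

theorem stmt_7 (n d ℓ : ℕ) (hℓeven : Even ℓ) (hℓpos : 0 < ℓ)
    (a : Fin n → Fin d → ℝ)
    (𝒜 : Fin ℓ → Finset (Fin n))
    (hdisj : Pairwise fun i j => Disjoint (𝒜 i) (𝒜 j))
    (hcover : ∀ i : Fin n, ∃ j, i ∈ 𝒜 j)
    (r : Fin ℓ → ℕ)
    (hr : ∀ j, Module.finrank ℝ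
      (Submodule.span ℝ (a '' (𝒜 j : Set (Fin n)))) = r j)
    (u : Fin d → ℝ) :
    (Set.ncard {ε : Fin n → ℝ |
        (∀ i, ε i = 1 ∨ ε i = -1) ∧ ∑ i, ε i • a i = u} : ℝ) / 2 ^ n
      ≤ ((1 / 2 ^ ℓ : ℝ) * (ℓ.choose (ℓ / 2) : ℝ)) ^ ((∑ j, r j : ℝ) / ℓ) := by
  classical
  -- module setup
  have hsetfin : (Set.range a ∪ {u} : Set (Fin d → ℝ)).Finite :=
    (Set.finite_range a).union (Set.finite_singleton u)
  set P : Submodule ℤ (Fin d → ℝ) := Submodule.span ℤ (Set.range a ∪ {u}) with hPdef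
  haveI : Module.Finite ℤ P := Module.Finite.span_of_finite ℤ hsetfin
  haveI : Module.IsTorsionFree ℤ P := inferInstance
  haveI : Module.Free ℤ P := Module.free_of_finite_type_torsion_free'
  set ιB := Module.Free.ChooseBasisIndex ℤ P with hιB
  haveI : DecidableEq ιB := Classical.decEq _
  set b : Module.Basis ιB ℤ P := Module.Free.chooseBasis ℤ P with hbdef
  have ha : ∀ i, a i ∈ P := fun i => Submodule.subset_span (Or.inl ⟨i, rfl⟩)
  have hu : u ∈ P := Submodule.subset_span (Or.inr rfl)
  set A : Fin n → ιB → ℤ := fun i k => b.repr ⟨a i, ha i⟩ k with hA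
  set U : ιB → ℤ := fun k => b.repr ⟨u, hu⟩ k with hU
  -- forward transfer : real solutions give integer solutions
  have fwd : ∀ ζ : Fin n → ℤ, (∑ i, (ζ i : ℝ) • a i = u) → ∀ k, ∑ i, ζ i * A i k = U k := by
    intro ζ h k
    have h1 : ∑ i, ζ i • (⟨a i, ha i⟩ : P) = ⟨u, hu⟩ := by
      apply Subtype.ext
      push_cast
      rw [← h]
      refine Finset.sum_congr rfl fun i _ => ?_
      exact (Int.cast_smul_eq_zsmul ℝ (ζ i) (a i)).symm
    have h2 := congrArg (fun z : P => (b.repr z) k) h1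
    simp only [map_sum, map_zsmul, Finsupp.coe_finset_sum, Finset.sum_apply,
      Finsupp.coe_smul, Pi.smul_apply, smul_eq_mul] at h2
    rw [hA, hU]
    exact h2
  -- backward transfer : integer relations give real relations
  have repr_eq : ∀ (Bf : Finset (Fin n)) (c : Fin n → ℤ),
      (∀ k, ∑ i ∈ Bf, c i * A i k = 0) → ∑ i ∈ Bf, (c i : ℝ) • a i = 0 := by
    intro Bf c hk
    have h1 : b.repr (∑ i ∈ Bf, c i • (⟨a i, ha i⟩ : P)) = 0 := by
      ext k
      simp only [map_sum, map_zsmul, Finsupp.coe_finset_sum, Finset.sum_apply,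
        Finsupp.coe_smul, Pi.smul_apply, smul_eq_mul, Finsupp.coe_zero, Pi.zero_apply]
      exact hk k
    have h2 : (∑ i ∈ Bf, c i • (⟨a i, ha i⟩ : P)) = 0 := by
      apply b.repr.injective
      simpa using h1
    have h3 := congrArg (Subtype.val) h2
    push_cast at h3
    rw [← h3]
    refine Finset.sum_congr rfl fun i _ => ?_
    exact Int.cast_smul_eq_zsmul ℝ (c i) (a i)
  -- size bound and prime choice
  set Mz : ℤ := ∑ i, ∑ k, |A i k| with hMz
  have hMznn : 0 ≤ Mz := Finset.sum_nonneg fun i _ => Finset.sum_nonneg fun k _ => abs_nonneg _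
  have hAbound : ∀ k, ∀ (Bf : Finset (Fin n)), ∑ i ∈ Bf, |A i k| ≤ Mz := by
    intro k Bf
    calc ∑ i ∈ Bf, |A i k| ≤ ∑ i, |A i k| :=
          Finset.sum_le_sum_of_subset_of_nonneg (Finset.subset_univ _)
            (fun i _ _ => abs_nonneg _)
      _ ≤ Mz := Finset.sum_le_sum fun i _ =>
          Finset.single_le_sum (f := fun k' => |A i k'|) (fun k' _ => abs_nonneg _)
            (Finset.mem_univ k)
  obtain ⟨p, hpge, hpprime⟩ := Nat.exists_infinite_primes (2 * ℓ * Mz.toNat + 2)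
  haveI : NeZero p := ⟨hpprime.ne_zero⟩
  set v : Fin n → ιB → ZMod p := fun i k => ((A i k : ℤ) : ZMod p) with hv
  set w : ιB → ZMod p := fun k => ((U k : ℤ) : ZMod p) with hw
  have hplarge : 2 * (ℓ:ℤ) * Mz < (p:ℤ) := by
    have h1 : ((2 * ℓ * Mz.toNat + 2 : ℕ) : ℤ) ≤ (p : ℤ) := by exact_mod_cast hpge
    have h2 : ((2 * ℓ * Mz.toNat : ℕ) : ℤ) = 2 * (ℓ:ℤ) * Mz := by
      push_cast [Int.toNat_of_nonneg hMznn]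
      ring
    push_cast at h1
    rw [Int.toNat_of_nonneg hMznn] at h1
    linarith
  -- small-coefficient relations mod p lift to ℤ
  have small_zero : ∀ (Bf : Finset (Fin n)) (c : Fin n → ℤ), (∀ i, |c i| ≤ 2 * ℓ) →
      (∑ i ∈ Bf, c i • v i = 0) → ∀ k, ∑ i ∈ Bf, c i * A i k = 0 := by
    intro Bf c hc h0 k
    have hcast : ((∑ i ∈ Bf, c i * A i k : ℤ) : ZMod p) = 0 := by
      have h1 := congrFun h0 k
      simp only [Finset.sum_apply, Pi.smul_apply, Pi.zero_apply, hv] at h1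
      rw [← h1, Int.cast_sum]
      exact Finset.sum_congr rfl fun i _ => by rw [Int.cast_mul, zsmul_eq_mul]
    have hdvd : (p:ℤ) ∣ ∑ i ∈ Bf, c i * A i k := (ZMod.intCast_zmod_eq_zero_iff_dvd _ _).1 hcast
    apply Int.eq_zero_of_abs_lt_dvd hdvd
    calc |∑ i ∈ Bf, c i * A i k| ≤ ∑ i ∈ Bf, |c i * A i k| := Finset.abs_sum_le_sum_abs _ _
      _ ≤ ∑ i ∈ Bf, (2 * (ℓ:ℤ)) * |A i k| := Finset.sum_le_sum fun i _ => by
          rw [abs_mul]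
          refine mul_le_mul_of_nonneg_right ?_ (abs_nonneg _)
          exact_mod_cast hc i
      _ = (2 * (ℓ:ℤ)) * ∑ i ∈ Bf, |A i k| := by rw [Finset.mul_sum]
      _ ≤ (2 * (ℓ:ℤ)) * Mz := by
          refine mul_le_mul_of_nonneg_left (hAbound k Bf) (by positivity)
      _ < p := hplarge
  -- independent subsets
  have hBex := fun j => exists_indep_subset a (𝒜 j) (r j) (hr j)
  choose B hBsub hBcard hBlin using hBex
  have hind : ∀ j (c : Fin n → ℤ), (∀ i, |c i| ≤ 2 * ℓ) →
      (∑ i ∈ B j, c i • v i = 0) → ∀ i ∈ B j, c i = 0 := by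
    intro j c hc h0 i hi
    have hreal := repr_eq (B j) c (small_zero (B j) c hc h0)
    have h5 := hBlin j (fun i => (c i : ℝ)) hreal i hi
    change (c i : ℝ) = 0 at h5
    exact_mod_cast h5
  -- key counting bound
  have key := key_count (p := p) hℓeven hℓpos 𝒜 hdisj hcover r B hBsub hBcard v w hind
  -- count real solutions by boolean mod-p solutions
  set Tf : Finset (Fin n → Bool) := Finset.univ.filter (fun σ : Fin n → Bool =>
      ∑ i, (if σ i then (1:ℤ) else -1) • v i = w) with hTf
  set S : Set (Fin n → ℝ) := {ε : Fin n → ℝ |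
      (∀ i, ε i = 1 ∨ ε i = -1) ∧ ∑ i, ε i • a i = u} with hS
  have hncard : (Set.ncard S : ℝ) ≤ (Tf.card : ℝ) := by
    have hval : ∀ ε ∈ S, ∀ i,
        (if (if ε i = 1 then true else false) then (1:ℝ) else -1) = ε i := by
      intro ε hε i
      rcases hε.1 i with h | h
      · simp [h]
      · have hne : ε i ≠ 1 := by rw [h]; norm_num
        rw [if_neg hne]
        simp [h]
    have castite : ∀ bb : Bool, (Int.cast (if bb then (1:ℤ) else -1) : ℝ) = if bb then (1:ℝ) else -1 := by
      intro bb; cases bb <;> norm_num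
    have hmaps : ∀ ε ∈ S, (fun i => if ε i = 1 then true else false) ∈ (Tf : Set (Fin n → Bool)) := by
      intro ε hε
      rw [Finset.mem_coe, hTf, Finset.mem_filter]
      refine ⟨Finset.mem_univ _, ?_⟩
      set ζ : Fin n → ℤ := fun i => if (if ε i = 1 then true else false) then (1:ℤ) else -1
        with hζ
      have hsol : ∑ i, (ζ i : ℝ) • a i = u := by
        rw [← hε.2]
        refine Finset.sum_congr rfl fun i _ => ?_
        rw [hζ]
        simp only
        rw [castite, hval ε hε i]
      have hk := fwd ζ hsol
      funext k
      simp only [Finset.sum_apply, Pi.smul_apply, hv, hw]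
      calc ∑ i, ζ i • ((A i k : ℤ) : ZMod p)
          = ∑ i, ((ζ i * A i k : ℤ) : ZMod p) := by
            refine Finset.sum_congr rfl fun i _ => ?_
            rw [zsmul_eq_mul]
            push_cast
            ring
        _ = ((∑ i, ζ i * A i k : ℤ) : ZMod p) := by
            rw [Int.cast_sum]
        _ = ((U k : ℤ) : ZMod p) := by rw [hk k]
    have hinj : Set.InjOn (fun ε : Fin n → ℝ => fun i => if ε i = 1 then true else false) S := by
      intro ε hε ε' hε' heq
      funext i
      rw [← hval ε hε i, ← hval ε' hε' i]
      rw [show (if ε i = 1 then true else false)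
        = (if ε' i = 1 then true else false) from congrFun heq i]
    have := Set.ncard_le_ncard_of_injOn _ hmaps hinj (Tf.finite_toSet)
    rw [Set.ncard_coe_finset] at this
    exact_mod_cast this
  -- final algebra
  set Ct : ℝ := (ℓ.choose (ℓ / 2) : ℝ) with hCt
  set base : ℝ := Ct / 2 ^ ℓ with hbase
  have hbasenn : 0 ≤ base := by positivity
  have hxnn : (0:ℝ) ≤ (Set.ncard S : ℝ) / 2 ^ n := by positivity
  have hgoal_base : ((1 / 2 ^ ℓ : ℝ) * (ℓ.choose (ℓ / 2) : ℝ)) = base := by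
    rw [hbase, hCt]; ring
  rw [hS] at *
  rw [hgoal_base]
  have hxle : (Set.ncard S : ℝ) / 2 ^ n ≤ (Tf.card : ℝ) / 2 ^ n := by gcongr
  have hpow : ((Set.ncard S : ℝ) / 2 ^ n) ^ ℓ ≤ base ^ (∑ j, r j) := by
    calc ((Set.ncard S : ℝ) / 2 ^ n) ^ ℓ ≤ ((Tf.card : ℝ) / 2 ^ n) ^ ℓ := by
          apply pow_le_pow_left₀ hxnn hxle
      _ ≤ ∏ j, base ^ (r j) := key
      _ = base ^ (∑ j, r j) := Finset.prod_pow_eq_pow_sum _ _ _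
  -- convert to rpow
  have hℓne : (ℓ:ℝ) ≠ 0 := by exact_mod_cast hℓpos.ne'
  calc (Set.ncard S : ℝ) / 2 ^ n
      = (((Set.ncard S : ℝ) / 2 ^ n) ^ ℓ) ^ ((ℓ:ℝ)⁻¹) := by
        rw [Real.pow_rpow_inv_natCast hxnn hℓpos.ne']
    _ ≤ (base ^ (∑ j, r j)) ^ ((ℓ:ℝ)⁻¹) := by
        apply Real.rpow_le_rpow (by positivity) hpow (by positivity)
    _ = base ^ ((∑ j, r j : ℝ) / ℓ) := by
        rw [← Real.rpow_natCast base (∑ j, r j), ← Real.rpow_mul hbasenn]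
        rw [div_eq_mul_inv]
        congr 1
        push_cast
        ring
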